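/- Let n ≥ 1, let t0 ≤ tf be reals, let f : ℝ × ℝⁿ → ℝⁿ be continuous, let V : ℝ × ℝⁿ → ℝ be continuously differentiable with V(t,x) ≥ 0 for all (t,x) ∈ [t0,tf] × ℝⁿ, and let G ⊆ ℝⁿ. Assume that for every t ∈ [t0,tf] and every x ∈ ℝⁿ with V(t,x) = 1 one has ∂V/∂t(t,x) + ⟨∇ₓV(t,x), f(t,x)⟩ < 0, and assume that {x ∈ ℝⁿ : V(tf,x) ≤ 1} ⊆ G. Then for every τ ∈ [t0,tf] and every differentiable curve x : [τ,tf] → ℝⁿ satisfying x′(t) = f(t,x(t)) for all t ∈ [τ,tf] and V(τ,x(τ)) ≤ 1, one has x(tf) ∈ G. -/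

import Mathlib

open Set
open Filter Topology

/-- Lemma 1 of the paper ("funnel into G" part): if the time-varying Lyapunov function `V`
decreases strictly along the vector field on its unit level set for every time in
`[t0, tf]`, and the final-time sublevel set `Ω_{tf} = {x | V (tf, x) ≤ 1}` is contained
in the goal region `G`, then any solution of `ẋ = f(t, x)` starting inside `Ω_τ` at a
time `τ ∈ [t0, tf]` satisfies `x(tf) ∈ G`. -/
theorem funnel_into_goal
    (n : ℕ) (hn : 1 ≤ n) (t0 tf : ℝ) (ht : t0 ≤ tf)
    (f : ℝ × EuclideanSpace ℝ (Fin n) → EuclideanSpace ℝ (Fin n))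
    (hf : Continuous f)
    (V : ℝ × EuclideanSpace ℝ (Fin n) → ℝ)
    (hV : ContDiff ℝ 1 V)
    (hVnonneg : ∀ t ∈ Icc t0 tf, ∀ x : EuclideanSpace ℝ (Fin n), 0 ≤ V (t, x))
    (G : Set (EuclideanSpace ℝ (Fin n)))
    (hdec : ∀ t ∈ Icc t0 tf, ∀ x : EuclideanSpace ℝ (Fin n), V (t, x) = 1 →
      deriv (fun s => V (s, x)) t
        + fderiv ℝ (fun y => V (t, y)) x (f (t, x)) < 0)
    (hgoal : {x : EuclideanSpace ℝ (Fin n) | V (tf, x) ≤ 1} ⊆ G)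
    (τ : ℝ) (hτ : τ ∈ Icc t0 tf)
    (x : ℝ → EuclideanSpace ℝ (Fin n))
    (hx : ∀ t ∈ Icc τ tf, HasDerivWithinAt x (f (t, x t)) (Icc τ tf) t)
    (hinit : V (τ, x τ) ≤ 1) :
    x tf ∈ G := by
  have hτf : τ ≤ tf := hτ.2
  set g : ℝ → ℝ := fun t => V (t, x t) with hgdef
  have hxcont : ContinuousOn x (Icc τ tf) := fun t htm => (hx t htm).continuousWithinAt
  have hgcont : ContinuousOn g (Icc τ tf) :=
    hV.continuous.comp_continuousOn (continuousOn_id.prodMk hxcont)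
  have hVdiff := hV.differentiable one_ne_zero
  have hgderiv : ∀ s ∈ Icc τ tf,
      HasDerivWithinAt g (fderiv ℝ V (s, x s) (1, f (s, x s))) (Icc τ tf) s := by
    intro s hs
    have h1 : HasDerivWithinAt (fun t => (t, x t)) ((1 : ℝ), f (s, x s)) (Icc τ tf) s :=
      (hasDerivWithinAt_id s _).prodMk (hx s hs)
    exact (hVdiff (s, x s)).hasFDerivAt.comp_hasDerivWithinAt s h1
  have hneg : ∀ s ∈ Icc τ tf, g s = 1 → fderiv ℝ V (s, x s) (1, f (s, x s)) < 0 := by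
    intro s hs hgs
    have hs' : s ∈ Icc t0 tf := ⟨hτ.1.trans hs.1, hs.2⟩
    have hd := hdec s hs' (x s) hgs
    have hF := (hVdiff (s, x s)).hasFDerivAt
    have ht1 : HasDerivAt (fun u => V (u, x s)) (fderiv ℝ V (s, x s) (1, 0)) s := by
      have h := hF.comp_hasDerivAt s ((hasDerivAt_id s).prodMk (hasDerivAt_const s (x s)))
      exact h
    have ht2 : fderiv ℝ (fun y => V (s, y)) (x s) (f (s, x s))
        = fderiv ℝ V (s, x s) (0, f (s, x s)) := by
      have h : HasFDerivAt (fun y => V (s, y))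
          ((fderiv ℝ V (s, x s)).comp (ContinuousLinearMap.inr ℝ ℝ _)) (x s) :=
        hF.comp (x s) (hasFDerivAt_prodMk_right s (x s))
      rw [h.fderiv]; rfl
    rw [ht1.deriv, ht2] at hd
    have hsum : ((1 : ℝ), f (s, x s))
        = ((1 : ℝ), (0 : EuclideanSpace ℝ (Fin n))) + (0, f (s, x s)) := by
      simp
    rw [hsum, map_add]
    exact hd
  by_contra hG
  have hgtf : 1 < g tf := by
    by_contra h
    push_neg at h
    exact hG (hgoal h)
  set S : Set ℝ := {t ∈ Icc τ tf | g t ≤ 1} with hSdef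
  have hSne : S.Nonempty := ⟨τ, ⟨left_mem_Icc.2 hτf, hinit⟩⟩
  have hSbdd : BddAbove S := ⟨tf, fun t htm => htm.1.2⟩
  have hScl : IsClosed S :=
    hgcont.preimage_isClosed_of_isClosed isClosed_Icc isClosed_Iic
  set s := sSup S with hsdef
  have hsS : s ∈ S := hScl.csSup_mem hSne hSbdd
  have hs : s ∈ Icc τ tf := hsS.1
  have hgt : ∀ t, s < t → t ≤ tf → 1 < g t := by
    intro t h1 h2
    by_contra h
    push_neg at h
    exact absurd (le_csSup hSbdd ⟨⟨hs.1.trans h1.le, h2⟩, h⟩) (not_le.2 h1)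
  have hstf : s < tf := by
    rcases lt_or_eq_of_le hs.2 with h | h
    · exact h
    · exact absurd (h ▸ hsS.2) (not_le.2 hgtf)
  have hle : 𝓝[>] s ≤ 𝓝[Icc τ tf] s :=
    nhdsWithin_le_of_mem (Filter.mem_of_superset (Ioc_mem_nhdsGT_of_mem ⟨le_rfl, hstf⟩)
      (fun t htm => ⟨hs.1.trans htm.1.le, htm.2⟩))
  have hle' : 𝓝[>] s ≤ 𝓝[Icc τ tf \ {s}] s :=
    nhdsWithin_le_of_mem (Filter.mem_of_superset (Ioc_mem_nhdsGT_of_mem ⟨le_rfl, hstf⟩)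
      (fun t htm => ⟨⟨hs.1.trans htm.1.le, htm.2⟩, ne_of_gt htm.1⟩))
  have hgs1 : g s = 1 := by
    rcases lt_or_eq_of_le hsS.2 with h | h
    · exfalso
      have hev : ∀ᶠ t in 𝓝[>] s, g t < 1 :=
        ((hgcont s hs).mono_left hle).eventually_lt_const h
      have hmem : ∀ᶠ t in 𝓝[>] s, t ∈ Ioc s tf :=
        Ioc_mem_nhdsGT_of_mem ⟨le_rfl, hstf⟩
      obtain ⟨t, h1, h2⟩ := (hev.and hmem).exists
      exact absurd h1 (not_lt.2 (hgt t h2.1 h2.2).le)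
    · exact h
  have hD := hneg s hs hgs1
  have hslope : Filter.Tendsto (slope g s) (𝓝[>] s) (𝓝 (fderiv ℝ V (s, x s) (1, f (s, x s)))) :=
    (hasDerivWithinAt_iff_tendsto_slope.1 (hgderiv s hs)).mono_left hle'
  have hev : ∀ᶠ t in 𝓝[>] s, slope g s t < 0 := hslope.eventually_lt_const hD
  have hmem : ∀ᶠ t in 𝓝[>] s, t ∈ Ioc s tf := Ioc_mem_nhdsGT_of_mem ⟨le_rfl, hstf⟩
  obtain ⟨t, h1, h2⟩ := (hev.and hmem).exists
  have hts : (0 : ℝ) < t - s := sub_pos.2 h2.1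
  have : g t - g s < 0 := by
    have := h1
    rw [slope_def_field] at this
    -- slope g s t = (g t - g s) / (t - s)
    have h3 : (g t - g s) / (t - s) < 0 := by
      simpa [div_eq_inv_mul] using this
    rcases div_neg_iff.1 h3 with ⟨h4, h5⟩ | ⟨h4, h5⟩ <;> linarith
  have hlt : g t < 1 := by linarith [hgs1]
  exact absurd hlt (not_lt.2 (hgt t h2.1 h2.2).le)
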